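/- For every instance of the two-level problem (1|mc=2,mu|C_max), there exists an optimal feasible schedule obtained by concatenating covering blocks (in an arbitrary order): i.e., the minimum makespan equals the minimum over all assignments of Lo-tasks to Hi-tasks of Σ_i max(p_i^(1) + Σ_{j↦i} p_j^(1), p_i^(2)) + Σ_{unassigned j} p_j^(1). -/

import Mathlib

/-- Feasibility of a schedule of F-shaped tasks. -/
def Feasible {ι : Type*} (X : ι → ℕ) (p : ι → ℕ → ℕ) (s : ι → ℕ) : Prop :=
  ∀ i j, i ≠ j →
    s i + p i (min (X i) (X j)) ≤ s j ∨ s j + p j (min (X i) (X j)) ≤ s i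

/-- Makespan of a schedule. -/
def makespan {ι : Type*} [Fintype ι] (X : ι → ℕ) (p : ι → ℕ → ℕ) (s : ι → ℕ) : ℕ :=
  Finset.univ.sup fun i => s i + p i (X i)

/-- A valid set of F-shaped tasks with criticalities in {1,…,L} and strictly
increasing processing times on levels 1..X i. -/
def ValidInstance {ι : Type*} (L : ℕ) (X : ι → ℕ) (p : ι → ℕ → ℕ) : Prop :=
  ∀ i, 1 ≤ X i ∧ X i ≤ L ∧ StrictMonoOn (p i) (Set.Icc 1 (X i))

/-- A valid assignment maps each Lo-task to at most one Hi-task. -/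
def ValidAssignment {n : ℕ} (X : Fin n → ℕ) (a : Fin n → Option (Fin n)) : Prop :=
  ∀ j i, a j = some i → X j = 1 ∧ X i = 2

/-- Length of the covering block of Hi-task i under assignment a. -/
def blockLen {n : ℕ} (X : Fin n → ℕ) (p : Fin n → ℕ → ℕ)
    (a : Fin n → Option (Fin n)) (i : Fin n) : ℕ :=
  max (p i 1 + ∑ j ∈ Finset.univ.filter fun j => X j = 1 ∧ a j = some i, p j 1)
    (p i 2)

/-- Objective value of the covering formulation for assignment a. -/
def coverObj {n : ℕ} (X : Fin n → ℕ) (p : Fin n → ℕ → ℕ)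
    (a : Fin n → Option (Fin n)) : ℕ :=
  (∑ i ∈ Finset.univ.filter fun i => X i = 2, blockLen X p a i) +
    ∑ j ∈ Finset.univ.filter fun j => X j = 1 ∧ a j = none, p j 1

/-- for the two-level problem, the optimal makespan equals the
minimum of the covering objective over all assignments of Lo-tasks to Hi-tasks. -/
/- ---------------- auxiliary lemmas ---------------- -/

lemma Ico_disj {a b c d : ℕ} (h : b ≤ c ∨ d ≤ a) :
    Disjoint (Finset.Ico a b) (Finset.Ico c d) := by
  rw [Finset.disjoint_left]
  intro x hx hx'
  simp only [Finset.mem_Ico] at hx hx'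
  omega

lemma p_min_le {n : ℕ} {X : Fin n → ℕ} {p : Fin n → ℕ → ℕ}
    (hI : ValidInstance 2 X p) (i j : Fin n) :
    p i (min (X i) (X j)) ≤ p i (X i) := by
  obtain ⟨h1, h2, hm⟩ := hI i
  obtain ⟨h1', -, -⟩ := hI j
  rcases Nat.lt_or_ge (min (X i) (X j)) (X i) with h | h
  · exact le_of_lt (hm ⟨by omega, by omega⟩ ⟨h1, le_refl _⟩ h)
  · have heq : min (X i) (X j) = X i := by omega
    rw [heq]

lemma p12 {n : ℕ} {X : Fin n → ℕ} {p : Fin n → ℕ → ℕ}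
    (hI : ValidInstance 2 X p) {i : Fin n} (h2 : X i = 2) :
    p i 1 ≤ p i 2 := by
  obtain ⟨h1, hL, hm⟩ := hI i
  exact le_of_lt (hm ⟨le_refl _, by omega⟩ ⟨by omega, by omega⟩ (by omega))

lemma X_cases {n : ℕ} {X : Fin n → ℕ} {p : Fin n → ℕ → ℕ}
    (hI : ValidInstance 2 X p) (i : Fin n) : X i = 1 ∨ X i = 2 := by
  obtain ⟨h1, h2, -⟩ := hI i; omega

lemma hi_none {n : ℕ} {X : Fin n → ℕ} {a : Fin n → Option (Fin n)}
    (ha : ValidAssignment X a) {i : Fin n} (h2 : X i = 2) : a i = none := by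
  cases h : a i with
  | none => rfl
  | some i' => have := (ha i i' h).1; omega


/- ---------------- Direction 1: schedule from assignment ---------------- -/

section Dir1

def tlen {n : ℕ} (X : Fin n → ℕ) (p : Fin n → ℕ → ℕ) (a : Fin n → Option (Fin n))
    (k : Fin n) : ℕ := if X k = 2 then blockLen X p a k else p k 1

def tstart {n : ℕ} (X : Fin n → ℕ) (p : Fin n → ℕ → ℕ) (a : Fin n → Option (Fin n))
    (m : Fin n) : ℕ :=
  ∑ t ∈ Finset.univ.filter (fun t => a t = none ∧ t < m), tlen X p a t

def toff {n : ℕ} (X : Fin n → ℕ) (p : Fin n → ℕ → ℕ) (a : Fin n → Option (Fin n))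
    (k : Fin n) : ℕ :=
  match a k with
  | none => 0
  | some i => p i 1 + ∑ j ∈ Finset.univ.filter (fun j => a j = some i ∧ j < k), p j 1

def sched {n : ℕ} (X : Fin n → ℕ) (p : Fin n → ℕ → ℕ) (a : Fin n → Option (Fin n))
    (k : Fin n) : ℕ := tstart X p a ((a k).getD k) + toff X p a k

variable {n : ℕ} {X : Fin n → ℕ} {p : Fin n → ℕ → ℕ} {a : Fin n → Option (Fin n)}

lemma anchor_none (ha : ValidAssignment X a) (k : Fin n) :
    a ((a k).getD k) = none := by
  cases h : a k with
  | none => simpa using h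
  | some i =>
    simp only [h, Option.getD_some]
    exact hi_none ha (ha k i h).2

lemma filter_assign_eq (ha : ValidAssignment X a) (i : Fin n) :
    Finset.univ.filter (fun j => X j = 1 ∧ a j = some i)
      = Finset.univ.filter (fun j => a j = some i) := by
  ext j
  simp only [Finset.mem_filter, Finset.mem_univ, true_and]
  exact ⟨And.right, fun h => ⟨(ha j i h).1, h⟩⟩

lemma sum_lt_le (i k : Fin n) (hk : a k = some i) :
    (∑ j ∈ Finset.univ.filter (fun j => a j = some i ∧ j < k), p j 1) + p k 1
      ≤ ∑ j ∈ Finset.univ.filter (fun j => a j = some i), p j 1 := by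
  have hnot : k ∉ Finset.univ.filter (fun j => a j = some i ∧ j < k) := by
    simp
  have hsub : insert k (Finset.univ.filter (fun j => a j = some i ∧ j < k))
      ⊆ Finset.univ.filter (fun j => a j = some i) := by
    intro x hx
    simp only [Finset.mem_insert, Finset.mem_filter, Finset.mem_univ, true_and] at hx ⊢
    rcases hx with rfl | ⟨h1, -⟩
    · exact hk
    · exact h1
  calc (∑ j ∈ Finset.univ.filter (fun j => a j = some i ∧ j < k), p j 1) + p k 1
      = ∑ j ∈ insert k (Finset.univ.filter (fun j => a j = some i ∧ j < k)), p j 1 := by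
        rw [Finset.sum_insert hnot]; omega
    _ ≤ _ := Finset.sum_le_sum_of_subset hsub

lemma sched_ub (hI : ValidInstance 2 X p) (ha : ValidAssignment X a) (k : Fin n) :
    sched X p a k + p k (X k)
      ≤ tstart X p a ((a k).getD k) + tlen X p a ((a k).getD k) := by
  cases hak : a k with
  | none =>
    simp only [sched, toff, hak, Option.getD_none, add_zero, tlen]
    rcases X_cases hI k with h1 | h2
    · rw [h1, if_neg (by omega)]
    · rw [h2, if_pos rfl]
      exact Nat.add_le_add_left (le_max_right _ _) _
  | some i =>
    obtain ⟨hXk, hXi⟩ := ha k i hak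
    simp only [sched, toff, hak, Option.getD_some, tlen, if_pos hXi, blockLen, hXk,
      filter_assign_eq ha]
    have := sum_lt_le (p := p) i k hak
    have hle : p i 1 + (∑ j ∈ Finset.univ.filter (fun j => a j = some i), p j 1)
        ≤ max (p i 1 + ∑ j ∈ Finset.univ.filter (fun j => a j = some i), p j 1) (p i 2) :=
      le_max_left _ _
    omega

lemma sched_lb (k : Fin n) : tstart X p a ((a k).getD k) ≤ sched X p a k :=
  Nat.le_add_right _ _

lemma tstart_mono {m m' : Fin n} (hm : a m = none) (hlt : m < m') :
    tstart X p a m + tlen X p a m ≤ tstart X p a m' := by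
  have hnot : m ∉ Finset.univ.filter (fun t => a t = none ∧ t < m) := by simp
  have hsub : insert m (Finset.univ.filter (fun t => a t = none ∧ t < m))
      ⊆ Finset.univ.filter (fun t => a t = none ∧ t < m') := by
    intro x hx
    simp only [Finset.mem_insert, Finset.mem_filter, Finset.mem_univ, true_and] at hx ⊢
    rcases hx with rfl | ⟨h1, h2⟩
    · exact ⟨hm, hlt⟩
    · exact ⟨h1, lt_trans h2 hlt⟩
  calc tstart X p a m + tlen X p a m
      = ∑ t ∈ insert m (Finset.univ.filter (fun t => a t = none ∧ t < m)), tlen X p a t := by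
        rw [Finset.sum_insert hnot, tstart]; omega
    _ ≤ _ := Finset.sum_le_sum_of_subset hsub

lemma sep_of_anchor_lt (hI : ValidInstance 2 X p) (ha : ValidAssignment X a)
    {k k' : Fin n} (h : ((a k).getD k) < ((a k').getD k')) :
    sched X p a k + p k (X k) ≤ sched X p a k' := by
  calc sched X p a k + p k (X k)
      ≤ tstart X p a ((a k).getD k) + tlen X p a ((a k).getD k) := sched_ub hI ha k
    _ ≤ tstart X p a ((a k').getD k') := tstart_mono (anchor_none ha k) h
    _ ≤ sched X p a k' := sched_lb k'

lemma sep_same_block (hI : ValidInstance 2 X p) (ha : ValidAssignment X a)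
    {i k k' : Fin n} (hk : a k = some i) (hk' : a k' = some i) (hlt : k < k') :
    sched X p a k + p k 1 ≤ sched X p a k' := by
  simp only [sched, toff, hk, hk', Option.getD_some]
  have hnot : k ∉ Finset.univ.filter (fun j => a j = some i ∧ j < k) := by simp
  have hsub : insert k (Finset.univ.filter (fun j => a j = some i ∧ j < k))
      ⊆ Finset.univ.filter (fun j => a j = some i ∧ j < k') := by
    intro x hx
    simp only [Finset.mem_insert, Finset.mem_filter, Finset.mem_univ, true_and] at hx ⊢
    rcases hx with rfl | ⟨h1, h2⟩
    · exact ⟨hk, hlt⟩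
    · exact ⟨h1, lt_trans h2 hlt⟩
  have hsum : (∑ j ∈ Finset.univ.filter (fun j => a j = some i ∧ j < k), p j 1) + p k 1
      ≤ ∑ j ∈ Finset.univ.filter (fun j => a j = some i ∧ j < k'), p j 1 := by
    calc (∑ j ∈ Finset.univ.filter (fun j => a j = some i ∧ j < k), p j 1) + p k 1
        = ∑ j ∈ insert k (Finset.univ.filter (fun j => a j = some i ∧ j < k)), p j 1 := by
          rw [Finset.sum_insert hnot]; omega
      _ ≤ _ := Finset.sum_le_sum_of_subset hsub
  omega

lemma sched_feasible (hI : ValidInstance 2 X p) (ha : ValidAssignment X a) :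
    Feasible X p (sched X p a) := by
  intro k k' hne
  have pk : p k (min (X k) (X k')) ≤ p k (X k) := p_min_le hI k k'
  have pk' : p k' (min (X k') (X k)) ≤ p k' (X k') := p_min_le hI k' k
  rw [min_comm] at pk'
  rcases lt_trichotomy ((a k).getD k) ((a k').getD k') with h | h | h
  · left
    have := sep_of_anchor_lt hI ha h
    omega
  · -- same anchor
    cases hak : a k with
    | none =>
      cases hak' : a k' with
      | none =>
        exfalso
        apply hne
        simpa [hak, hak'] using h
      | some i' =>
        -- k is the anchor of k' : k = i'
        have hki' : k = i' := by simpa [hak, hak'] using h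
        subst hki'
        obtain ⟨hX1, hX2⟩ := ha k' k hak'
        left
        rw [hX1, hX2]
        have hmin : min 2 1 = 1 := rfl
        rw [hmin]
        simp only [sched, toff, hak, hak', Option.getD_none, Option.getD_some, add_zero]
        omega
    | some i =>
      cases hak' : a k' with
      | none =>
        have hki : k' = i := by
          have : i = k' := by simpa [hak, hak'] using h
          omega
        subst hki
        obtain ⟨hX1, hX2⟩ := ha k k' hak
        right
        rw [hX1, hX2]
        have hmin : min 1 2 = 1 := rfl
        rw [hmin]
        simp only [sched, toff, hak, hak', Option.getD_none, Option.getD_some, add_zero]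
        omega
      | some i' =>
        have hii : i = i' := by simpa [hak, hak'] using h
        subst hii
        obtain ⟨hX1, -⟩ := ha k i hak
        obtain ⟨hX1', -⟩ := ha k' i hak'
        rw [hX1, hX1']
        have hmin : min 1 1 = 1 := rfl
        rw [hmin]
        rcases lt_trichotomy k k' with hlt | heq | hgt
        · exact Or.inl (sep_same_block hI ha hak hak' hlt)
        · exact absurd heq hne
        · exact Or.inr (sep_same_block hI ha hak' hak hgt)
  · right
    have := sep_of_anchor_lt hI ha h
    omega

lemma coverObj_eq_sum_tlen (hI : ValidInstance 2 X p) (ha : ValidAssignment X a) :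
    ∑ t ∈ Finset.univ.filter (fun t => a t = none), tlen X p a t = coverObj X p a := by
  rw [coverObj]
  have hsplit :
      ∑ t ∈ Finset.univ.filter (fun t => a t = none), tlen X p a t
        = (∑ t ∈ (Finset.univ.filter (fun t => a t = none)).filter (fun t => X t = 2),
            blockLen X p a t)
          + ∑ t ∈ (Finset.univ.filter (fun t => a t = none)).filter (fun t => ¬ X t = 2),
              p t 1 := by
    rw [← Finset.sum_filter_add_sum_filter_not
      (Finset.univ.filter (fun t => a t = none)) (fun t => X t = 2)]
    congr 1
    · apply Finset.sum_congr rfl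
      intro t ht
      simp only [Finset.mem_filter] at ht
      rw [tlen, if_pos ht.2]
    · apply Finset.sum_congr rfl
      intro t ht
      simp only [Finset.mem_filter] at ht
      rw [tlen, if_neg ht.2]
  rw [hsplit]
  congr 1
  · congr 1
    ext t
    simp only [Finset.mem_filter, Finset.mem_univ, true_and]
    exact ⟨fun h => h.2, fun h => ⟨hi_none ha h, h⟩⟩
  · apply Finset.sum_congr _ (fun _ _ => rfl)
    ext t
    simp only [Finset.mem_filter, Finset.mem_univ, true_and]
    constructor
    · rintro ⟨h1, h2⟩
      rcases X_cases hI t with h | h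
      · exact ⟨h, h1⟩
      · exact absurd h h2
    · rintro ⟨h1, h2⟩
      exact ⟨h2, by omega⟩

lemma makespan_sched_le (hI : ValidInstance 2 X p) (ha : ValidAssignment X a) :
    makespan X p (sched X p a) ≤ coverObj X p a := by
  rw [makespan]
  apply Finset.sup_le
  intro k _
  have h1 := sched_ub hI ha k
  set m := (a k).getD k with hm
  have hmnone : a m = none := anchor_none ha k
  have hnot : m ∉ Finset.univ.filter (fun t => a t = none ∧ t < m) := by simp
  have hsub : insert m (Finset.univ.filter (fun t => a t = none ∧ t < m))
      ⊆ Finset.univ.filter (fun t => a t = none) := by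
    intro x hx
    simp only [Finset.mem_insert, Finset.mem_filter, Finset.mem_univ, true_and] at hx ⊢
    rcases hx with rfl | ⟨hx1, -⟩
    · exact hmnone
    · exact hx1
  have h2 : tstart X p a m + tlen X p a m
      ≤ ∑ t ∈ Finset.univ.filter (fun t => a t = none), tlen X p a t := by
    calc tstart X p a m + tlen X p a m
        = ∑ t ∈ insert m (Finset.univ.filter (fun t => a t = none ∧ t < m)),
            tlen X p a t := by rw [Finset.sum_insert hnot, tstart]; omega
      _ ≤ _ := Finset.sum_le_sum_of_subset hsub
  rw [coverObj_eq_sum_tlen hI ha] at h2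
  omega

lemma dir1 (hI : ValidInstance 2 X p) (ha : ValidAssignment X a) :
    ∃ s, Feasible X p s ∧ makespan X p s ≤ coverObj X p a :=
  ⟨sched X p a, sched_feasible hI ha, makespan_sched_le hI ha⟩

end Dir1


/- ---------------- Direction 2: assignment from schedule ---------------- -/

section Dir2

variable {n : ℕ}

/-- The window predicate: Lo-task starting at `s j` fits in the high window of `i`. -/
def Win (X : Fin n → ℕ) (p : Fin n → ℕ → ℕ) (s : Fin n → ℕ) (j i : Fin n) : Prop :=
  X i = 2 ∧ s i + p i 1 ≤ s j ∧ s j < s i + p i 2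

open Classical in
noncomputable def mkAssign (X : Fin n → ℕ) (p : Fin n → ℕ → ℕ) (s : Fin n → ℕ) :
    Fin n → Option (Fin n) :=
  fun j => if h : X j = 1 ∧ ∃ i, Win X p s j i then some h.2.choose else none

variable {X : Fin n → ℕ} {p : Fin n → ℕ → ℕ} {s : Fin n → ℕ}

lemma mkAssign_some {j i : Fin n} (h : mkAssign X p s j = some i) :
    X j = 1 ∧ Win X p s j i := by
  classical
  rw [mkAssign] at h
  split at h
  · next hc =>
    have hh := Option.some.inj h
    exact ⟨hc.1, hh ▸ hc.2.choose_spec⟩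
  · exact absurd h (by simp)

lemma mkAssign_none {j : Fin n} (hXj : X j = 1) (h : mkAssign X p s j = none)
    (i : Fin n) : ¬ Win X p s j i := by
  intro hW
  classical
  rw [mkAssign] at h
  split at h
  · exact absurd h (by simp)
  · next hc => exact hc ⟨hXj, i, hW⟩

lemma mkAssign_valid : ValidAssignment X (mkAssign X p s) := by
  intro j i h
  obtain ⟨h1, h2, -⟩ := mkAssign_some h
  exact ⟨h1, h2⟩

/-- The block set of intervals covered by block `i`. -/
noncomputable def blkSet (X : Fin n → ℕ) (p : Fin n → ℕ → ℕ) (s : Fin n → ℕ) (i : Fin n) : Finset ℕ :=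
  if X i = 2 then
    Finset.Ico (s i) (s i + p i 2) ∪
      (Finset.univ.filter (fun j => mkAssign X p s j = some i)).biUnion
        (fun j => Finset.Ico (s j) (s j + p j 1))
  else Finset.Ico (s i) (s i + p i 1)

lemma mem_blkSet_hi {i : Fin n} (h2 : X i = 2) {x : ℕ} (hx : x ∈ blkSet X p s i) :
    (s i ≤ x ∧ x < s i + p i 2) ∨
      ∃ j, mkAssign X p s j = some i ∧ s j ≤ x ∧ x < s j + p j 1 := by
  rw [blkSet, if_pos h2, Finset.mem_union] at hx
  rcases hx with hx | hx
  · left; simpa [Finset.mem_Ico] using hx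
  · right
    rw [Finset.mem_biUnion] at hx
    obtain ⟨j, hj, hxj⟩ := hx
    simp only [Finset.mem_filter, Finset.mem_univ, true_and] at hj
    exact ⟨j, hj, by simpa [Finset.mem_Ico] using hxj⟩

lemma blkSet_lb {i : Fin n} (h2 : X i = 2) {x : ℕ} (hx : x ∈ blkSet X p s i) :
    s i ≤ x := by
  rcases mem_blkSet_hi h2 hx with ⟨h, -⟩ | ⟨j, hj, hjx, -⟩
  · exact h
  · have := (mkAssign_some hj).2.2.1
    omega

/-- Disjointness auxiliary: two Hi blocks in order. -/
lemma hi_hi_disj (hs : Feasible X p s) {i i' : Fin n} (h2 : X i = 2) (h2' : X i' = 2)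
    (horder : s i + p i 2 ≤ s i') {x : ℕ}
    (hx : x ∈ blkSet X p s i) (hx' : x ∈ blkSet X p s i') : False := by
  have hge : s i' ≤ x := blkSet_lb h2' hx'
  rcases mem_blkSet_hi h2 hx with ⟨-, hlt⟩ | ⟨j, hj, hjx1, hjx2⟩
  · omega
  · obtain ⟨hXj, -, hw1, hw2⟩ := mkAssign_some hj
    have hne : j ≠ i' := by intro h; rw [h] at hXj; omega
    have hf := hs j i' hne
    rw [hXj, h2'] at hf
    have hmin : min 1 2 = 1 := rfl
    rw [hmin] at hf
    rcases hf with hf | hf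
    · omega
    · omega

/-- Disjointness auxiliary: Hi block vs unassigned Lo task. -/
lemma hi_lo_disj (hs : Feasible X p s) {i j' : Fin n} (h2 : X i = 2) (hXj' : X j' = 1)
    (hnone : mkAssign X p s j' = none) {x : ℕ}
    (hx : x ∈ blkSet X p s i) (hx' : s j' ≤ x ∧ x < s j' + p j' 1) : False := by
  have hne : i ≠ j' := by intro h; rw [h] at h2; omega
  have hf := hs i j' hne
  rw [h2, hXj'] at hf
  have hmin : min 2 1 = 1 := rfl
  rw [hmin] at hf
  rcases hf with hf | hf
  · -- s i + p i 1 ≤ s j'; not in window, so s i + p i 2 ≤ s j'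
    have hw := mkAssign_none hXj' hnone i
    rw [Win] at hw
    push_neg at hw
    have hj'hi : s i + p i 2 ≤ s j' := hw h2 hf
    rcases mem_blkSet_hi h2 hx with ⟨-, hlt⟩ | ⟨j, hj, hjx1, hjx2⟩
    · omega
    · obtain ⟨hXj, -, hw1, hw2⟩ := mkAssign_some hj
      by_cases hjj : j = j'
      · subst hjj; omega
      · have hf2 := hs j j' hjj
        rw [hXj, hXj'] at hf2
        have hmin1 : min 1 1 = 1 := rfl
        rw [hmin1] at hf2
        rcases hf2 with hf2 | hf2 <;> omega
  · -- s j' + p j' 1 ≤ s i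
    have := blkSet_lb h2 hx
    omega

lemma blkSet_card_hi (hI : ValidInstance 2 X p) (hs : Feasible X p s) {i : Fin n}
    (h2 : X i = 2) : blockLen X p (mkAssign X p s) i ≤ (blkSet X p s i).card := by
  rw [blockLen]
  apply max_le
  · -- p i 1 + sum ≤ card
    have hfeq : Finset.univ.filter (fun j => X j = 1 ∧ mkAssign X p s j = some i)
        = Finset.univ.filter (fun j => mkAssign X p s j = some i) := by
      ext j
      simp only [Finset.mem_filter, Finset.mem_univ, true_and]
      exact ⟨And.right, fun h => ⟨(mkAssign_some h).1, h⟩⟩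
    rw [hfeq]
    set F := Finset.univ.filter (fun j => mkAssign X p s j = some i) with hF
    have hdisjJ : ∀ j ∈ F, ∀ j' ∈ F, j ≠ j' →
        Disjoint (Finset.Ico (s j) (s j + p j 1)) (Finset.Ico (s j') (s j' + p j' 1)) := by
      intro j hj j' hj' hne
      simp only [hF, Finset.mem_filter, Finset.mem_univ, true_and] at hj hj'
      have hXj := (mkAssign_some hj).1
      have hXj' := (mkAssign_some hj').1
      have hf := hs j j' hne
      rw [hXj, hXj'] at hf
      have hmin : min 1 1 = 1 := rfl
      rw [hmin] at hf
      exact Ico_disj hf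
    have hdisj0 : Disjoint (Finset.Ico (s i) (s i + p i 1))
        (F.biUnion (fun j => Finset.Ico (s j) (s j + p j 1))) := by
      rw [Finset.disjoint_biUnion_right]
      intro j hj
      simp only [hF, Finset.mem_filter, Finset.mem_univ, true_and] at hj
      have := (mkAssign_some hj).2.2.1
      exact Ico_disj (Or.inl this)
    have hsubset : Finset.Ico (s i) (s i + p i 1)
        ∪ F.biUnion (fun j => Finset.Ico (s j) (s j + p j 1)) ⊆ blkSet X p s i := by
      rw [blkSet, if_pos h2]
      apply Finset.union_subset_union_left
      apply Finset.Ico_subset_Ico (le_refl _)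
      have := p12 hI h2
      omega
    calc p i 1 + ∑ j ∈ F, p j 1
        = (Finset.Ico (s i) (s i + p i 1)).card
          + (F.biUnion (fun j => Finset.Ico (s j) (s j + p j 1))).card := by
          rw [Nat.card_Ico, Finset.card_biUnion hdisjJ]
          congr 1
          · omega
          · apply Finset.sum_congr rfl
            intro j _
            rw [Nat.card_Ico]
            omega
      _ = (Finset.Ico (s i) (s i + p i 1)
            ∪ F.biUnion (fun j => Finset.Ico (s j) (s j + p j 1))).card := by
          rw [Finset.card_union_of_disjoint hdisj0]
      _ ≤ _ := Finset.card_le_card hsubset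
  · -- p i 2 ≤ card
    have hsubset : Finset.Ico (s i) (s i + p i 2) ⊆ blkSet X p s i := by
      rw [blkSet, if_pos h2]
      exact Finset.subset_union_left
    have := Finset.card_le_card hsubset
    rw [Nat.card_Ico] at this
    omega

lemma blkSet_in_range (hI : ValidInstance 2 X p) (hM : ∀ k, s k + p k (X k) ≤ makespan X p s) {i : Fin n} {x : ℕ}
    (hx : x ∈ blkSet X p s i) : x < makespan X p s := by
  by_cases h2 : X i = 2
  · rcases mem_blkSet_hi h2 hx with ⟨-, hlt⟩ | ⟨j, hj, -, hjx2⟩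
    · have := hM i; rw [h2] at this; omega
    · have hXj := (mkAssign_some hj).1
      have := hM j; rw [hXj] at this; omega
  · rw [blkSet, if_neg h2, Finset.mem_Ico] at hx
    have := hM i
    have h1 : X i = 1 := by rcases X_cases hI i with h | h; exacts [h, absurd h h2]
    rw [h1] at this; omega

lemma dir2 (hI : ValidInstance 2 X p) (hs : Feasible X p s) :
    ∃ a, ValidAssignment X a ∧ coverObj X p a ≤ makespan X p s := by
  refine ⟨mkAssign X p s, mkAssign_valid, ?_⟩
  have hM : ∀ k, s k + p k (X k) ≤ makespan X p s := fun k => by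
    rw [makespan]
    exact Finset.le_sup (f := fun i => s i + p i (X i)) (Finset.mem_univ k)
  set a := mkAssign X p s with ha
  set T := Finset.univ.filter (fun i => a i = none) with hT
  -- coverObj ≤ sum of block set cards over T
  have step1 : coverObj X p a ≤ ∑ t ∈ T, (blkSet X p s t).card := by
    have hsplit : ∑ t ∈ T, (blkSet X p s t).card
        = (∑ t ∈ T.filter (fun t => X t = 2), (blkSet X p s t).card)
          + ∑ t ∈ T.filter (fun t => ¬ X t = 2), (blkSet X p s t).card :=
      (Finset.sum_filter_add_sum_filter_not T _ _).symm
    have hT2 : T.filter (fun t => X t = 2) = Finset.univ.filter (fun t => X t = 2) := by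
      ext t
      simp only [hT, Finset.mem_filter, Finset.mem_univ, true_and]
      exact ⟨fun h => h.2, fun h => ⟨hi_none mkAssign_valid h, h⟩⟩
    have hT1 : T.filter (fun t => ¬ X t = 2)
        = Finset.univ.filter (fun t => X t = 1 ∧ a t = none) := by
      ext t
      simp only [hT, Finset.mem_filter, Finset.mem_univ, true_and]
      constructor
      · rintro ⟨hn, h2⟩
        rcases X_cases hI t with h | h
        · exact ⟨h, hn⟩
        · exact absurd h h2
      · rintro ⟨h1, hn⟩
        exact ⟨hn, by omega⟩
    rw [hsplit, hT2, hT1, coverObj]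
    apply Nat.add_le_add
    · apply Finset.sum_le_sum
      intro t ht
      simp only [Finset.mem_filter, Finset.mem_univ, true_and] at ht
      exact blkSet_card_hi hI hs ht
    · apply le_of_eq
      apply Finset.sum_congr rfl
      intro t ht
      simp only [Finset.mem_filter, Finset.mem_univ, true_and] at ht
      rw [blkSet, if_neg (by omega), Nat.card_Ico]
      omega
  -- disjointness over T
  have hdisj : ∀ t ∈ T, ∀ t' ∈ T, t ≠ t' →
      Disjoint (blkSet X p s t) (blkSet X p s t') := by
    intro i hi i' hi' hne
    simp only [hT, Finset.mem_filter, Finset.mem_univ, true_and] at hi hi'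
    rw [Finset.disjoint_left]
    intro x hx hx'
    by_cases h2 : X i = 2 <;> by_cases h2' : X i' = 2
    · -- Hi vs Hi
      have hf := hs i i' hne
      rw [h2, h2'] at hf
      have hmin : min 2 2 = 2 := rfl
      rw [hmin] at hf
      rcases hf with hf | hf
      · exact hi_hi_disj hs h2 h2' hf hx hx'
      · exact hi_hi_disj hs h2' h2 hf hx' hx
    · -- Hi vs unassigned Lo
      have hXi' : X i' = 1 := by rcases X_cases hI i' with h | h; exacts [h, absurd h h2']
      rw [blkSet, if_neg h2', Finset.mem_Ico] at hx'
      exact hi_lo_disj hs h2 hXi' hi' hx hx'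
    · -- unassigned Lo vs Hi
      have hXi : X i = 1 := by rcases X_cases hI i with h | h; exacts [h, absurd h h2]
      rw [blkSet, if_neg h2, Finset.mem_Ico] at hx
      exact hi_lo_disj hs h2' hXi hi hx' hx
    · -- Lo vs Lo
      have hXi : X i = 1 := by rcases X_cases hI i with h | h; exacts [h, absurd h h2]
      have hXi' : X i' = 1 := by rcases X_cases hI i' with h | h; exacts [h, absurd h h2']
      rw [blkSet, if_neg h2, Finset.mem_Ico] at hx
      rw [blkSet, if_neg h2', Finset.mem_Ico] at hx'
      have hf := hs i i' hne
      rw [hXi, hXi'] at hf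
      have hmin : min 1 1 = 1 := rfl
      rw [hmin] at hf
      rcases hf with hf | hf <;> omega
  have step2 : ∑ t ∈ T, (blkSet X p s t).card ≤ makespan X p s := by
    rw [← Finset.card_biUnion hdisj]
    have hsub : T.biUnion (blkSet X p s) ⊆ Finset.range (makespan X p s) := by
      intro x hx
      rw [Finset.mem_biUnion] at hx
      obtain ⟨i, -, hxi⟩ := hx
      rw [Finset.mem_range]
      exact blkSet_in_range hI hM hxi
    have := Finset.card_le_card hsub
    rwa [Finset.card_range] at this
  omega

end Dir2

theorem stmt6 (n : ℕ) (X : Fin n → ℕ) (p : Fin n → ℕ → ℕ)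
    (hI : ValidInstance 2 X p) :
    sInf {C | ∃ s, Feasible X p s ∧ makespan X p s = C} =
      sInf {C | ∃ a, ValidAssignment X a ∧ coverObj X p a = C} := by
  have hRtriv : ValidAssignment X (fun _ => none) := fun j i h => by simp at h
  obtain ⟨s₁, hf₁, -⟩ := dir1 hI hRtriv
  have hLne : {C | ∃ s, Feasible X p s ∧ makespan X p s = C}.Nonempty :=
    ⟨makespan X p s₁, s₁, hf₁, rfl⟩
  have hRne : {C | ∃ a, ValidAssignment X a ∧ coverObj X p a = C}.Nonempty :=
    ⟨coverObj X p (fun _ => none), fun _ => none, hRtriv, rfl⟩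
  apply le_antisymm
  · obtain ⟨a₀, ha₀, hEq⟩ := Nat.sInf_mem hRne
    obtain ⟨s, hf, hle⟩ := dir1 hI ha₀
    calc sInf {C | ∃ s, Feasible X p s ∧ makespan X p s = C}
        ≤ makespan X p s := Nat.sInf_le ⟨s, hf, rfl⟩
      _ ≤ coverObj X p a₀ := hle
      _ = _ := hEq
  · obtain ⟨s₀, hs₀, hEq⟩ := Nat.sInf_mem hLne
    obtain ⟨a, ha, hle⟩ := dir2 hI hs₀
    calc sInf {C | ∃ a, ValidAssignment X a ∧ coverObj X p a = C}
        ≤ coverObj X p a := Nat.sInf_le ⟨a, ha, rfl⟩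
      _ ≤ makespan X p s₀ := hle
      _ = _ := hEq
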